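/- arXiv:1112.0673 — 4 statements merged into one kernel-verified Lean document; each statement's English description precedes it below -/
import Mathlib

section
/- Let A and B be bounded positive self-adjoint operators on a Hilbert space, g a bounded self-adjoint operator with 0 ≤ g ≤ 1, and h = √(1 − g²). Then √(gAg + hBh) ≥ g√A g + h√B h. -/
set_option synthInstance.maxHeartbeats 1000000
set_option maxHeartbeats 1000000

open scoped NNReal

section SqrtMono

variable {𝒜 : Type*} [CStarAlgebra 𝒜] [PartialOrder 𝒜] [StarOrderedRing 𝒜]

/-- Operator monotonicity of the square root, case where the larger element is a unit. -/
lemma my_sqrt_le_sqrt_of_isUnit {a b : 𝒜} (ha : 0 ≤ a) (hb : 0 ≤ b) (hbu : IsUnit b)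
    (hab : a ≤ b) : CFC.sqrt a ≤ CFC.sqrt b := by
  have h1 : ‖CFC.sqrt a * b ^ (-(1 / 2) : ℝ)‖ ≤ 1 :=
    (le_iff_norm_sqrt_mul_rpow a b ha ⟨hb, hbu⟩).mp hab
  have hsa : (0 : 𝒜) ≤ CFC.sqrt a := (CFC.sqrt_nonneg _)
  have hsb : (0 : 𝒜) ≤ CFC.sqrt b := (CFC.sqrt_nonneg _)
  have hbb : CFC.sqrt b * CFC.sqrt b = b := CFC.sqrt_mul_sqrt_self b hb
  -- `sqrt b` is a unit
  have hsbu : IsUnit (CFC.sqrt b) := by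
    have hcomm : Commute (CFC.sqrt b) (CFC.sqrt b * CFC.sqrt b) :=
      (Commute.refl (CFC.sqrt b)).mul_right (Commute.refl (CFC.sqrt b))
    rw [hbb] at hcomm
    have hcomm' : Commute (CFC.sqrt b) (↑hbu.unit⁻¹ : 𝒜) := by
      refine Commute.units_inv_right ?_
      simpa only [IsUnit.unit_spec] using hcomm
    refine isUnit_iff_exists.mpr ⟨CFC.sqrt b * ↑hbu.unit⁻¹, ?_, ?_⟩
    · rw [← mul_assoc, hbb, IsUnit.mul_val_inv]
    · rw [mul_assoc, ← hcomm'.eq, ← mul_assoc, hbb]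
      exact hbu.mul_val_inv
  rw [le_iff_norm_sqrt_mul_rpow _ _ hsa ⟨hsb, hsbu⟩]
  set x := CFC.sqrt (CFC.sqrt a) with hx
  set y := (CFC.sqrt b) ^ (-(1 / 2) : ℝ) with hy
  have hynn : (0 : 𝒜) ≤ y := CFC.rpow_nonneg
  have hxnn : (0 : 𝒜) ≤ x := (CFC.sqrt_nonneg _)
  have hxx : x * x = CFC.sqrt a := CFC.sqrt_mul_sqrt_self _ hsa
  have hb0 : (0 : ℝ≥0) ∉ spectrum ℝ≥0 b := spectrum.zero_notMem ℝ≥0 hbu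
  have hsb0 : (0 : ℝ≥0) ∉ spectrum ℝ≥0 (CFC.sqrt b) := spectrum.zero_notMem ℝ≥0 hsbu
  have hyy : y * y = b ^ (-(1 / 2) : ℝ) := by
    rw [hy, ← CFC.rpow_add hsbu]
    rw [CFC.sqrt_eq_rpow (a := b), CFC.rpow_rpow b (1 / 2) (-(1 / 2) + -(1 / 2)) (by norm_num) ⟨hb, hbu⟩]
    norm_num
  -- the element to bound
  set c := y * CFC.sqrt a * y with hc
  have hcnn : (0 : 𝒜) ≤ c := conjugate_nonneg_of_nonneg hsa hynn
  have hnorm : ‖x * y‖ * ‖x * y‖ = ‖c‖ := by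
    rw [← CStarRing.norm_star_mul_self, star_mul, (IsSelfAdjoint.of_nonneg hynn).star_eq,
      (IsSelfAdjoint.of_nonneg hxnn).star_eq]
    congr 1
    rw [hc, ← hxx]
    noncomm_ring
  have hcle : ‖c‖ ≤ 1 := by
    by_cases hc0 : c = 0
    · simp [hc0]
    have : Nontrivial 𝒜 := nontrivial_of_ne c 0 hc0
    have hmem : ‖c‖ ∈ spectrum ℝ c := CStarAlgebra.norm_mem_spectrum_of_nonneg hcnn
    have hne : (‖c‖ : ℝ) ≠ 0 := norm_ne_zero_iff.mpr hc0
    have hmem' : ‖c‖ ∈ spectrum ℝ (CFC.sqrt a * y * y) := by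
      have h2 := spectrum.nonzero_mul_comm (𝕜 := ℝ) y (CFC.sqrt a * y)
      have h3 : ‖c‖ ∈ spectrum ℝ (y * (CFC.sqrt a * y)) \ {0} := by
        refine ⟨?_, by simpa using hne⟩
        rw [← mul_assoc, ← hc]
        exact hmem
      rw [h2] at h3
      exact h3.1
    have h4 : ‖(‖c‖ : ℝ)‖ ≤ ‖CFC.sqrt a * y * y‖ := spectrum.norm_le_norm_of_mem hmem'
    rw [Real.norm_eq_abs, abs_of_nonneg (norm_nonneg c)] at h4
    calc ‖c‖ ≤ ‖CFC.sqrt a * y * y‖ := h4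
      _ = ‖CFC.sqrt a * b ^ (-(1 / 2) : ℝ)‖ := by rw [mul_assoc, hyy]
      _ ≤ 1 := h1
  nlinarith [norm_nonneg (x * y)]

/-- Operator monotonicity of the square root. -/
lemma my_sqrt_le_sqrt {a b : 𝒜} (ha : 0 ≤ a) (hab : a ≤ b) : CFC.sqrt a ≤ CFC.sqrt b := by
  have hb : 0 ≤ b := ha.trans hab
  have key : ∀ δ : ℝ, 0 < δ → CFC.sqrt a ≤ CFC.sqrt b + δ • 1 := by
    intro δ hδ
    have h1 : (0 : 𝒜) ≤ (δ ^ 2) • 1 := smul_nonneg (by positivity) zero_le_one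
    have hδu : IsUnit ((δ ^ 2 : ℝ) • (1 : 𝒜)) := by
      refine isUnit_iff_exists.mpr ⟨(δ ^ 2)⁻¹ • 1, ?_, ?_⟩ <;>
      · rw [smul_mul_smul_comm]
        simp [inv_mul_cancel₀ (by positivity : (δ ^ 2 : ℝ) ≠ 0),
          mul_inv_cancel₀ (by positivity : (δ ^ 2 : ℝ) ≠ 0)]
    have hbu : IsUnit (b + (δ ^ 2 : ℝ) • 1) :=
      CStarAlgebra.isUnit_of_le _ (le_add_of_nonneg_left hb) ⟨h1, hδu⟩
    have hb'nn : (0 : 𝒜) ≤ b + (δ ^ 2 : ℝ) • 1 := add_nonneg hb h1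
    have s1 : CFC.sqrt a ≤ CFC.sqrt (b + (δ ^ 2 : ℝ) • 1) :=
      my_sqrt_le_sqrt_of_isUnit ha hb'nn hbu (hab.trans (le_add_of_nonneg_right h1))
    set s : 𝒜 := CFC.sqrt b + δ • 1 with hs
    have hsnn : (0 : 𝒜) ≤ s := add_nonneg (CFC.sqrt_nonneg _) (smul_nonneg hδ.le zero_le_one)
    have hs2 : b + (δ ^ 2 : ℝ) • 1 ≤ s * s := by
      have hexp : s * s = b + (δ ^ 2 : ℝ) • 1 + (2 * δ) • CFC.sqrt b := by
        rw [hs]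
        simp only [add_mul, mul_add, CFC.sqrt_mul_sqrt_self b hb, smul_mul_assoc,
          mul_smul_comm, smul_smul, one_mul, mul_one]
        module
      rw [hexp]
      exact le_add_of_nonneg_right (smul_nonneg (by positivity) (CFC.sqrt_nonneg _))
    have hssnn : (0 : 𝒜) ≤ s * s := by
      simpa [(IsSelfAdjoint.of_nonneg hsnn).star_eq] using star_mul_self_nonneg s
    have hssu : IsUnit (s * s) := CStarAlgebra.isUnit_of_le _ hs2 ⟨hb'nn, hbu⟩
    have s2 : CFC.sqrt (b + (δ ^ 2 : ℝ) • 1) ≤ CFC.sqrt (s * s) :=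
      my_sqrt_le_sqrt_of_isUnit hb'nn hssnn hssu hs2
    rw [CFC.sqrt_mul_self s hsnn] at s2
    exact s1.trans s2
  have lim : Filter.Tendsto (fun n : ℕ => CFC.sqrt b + (1 / ((n : ℝ) + 1)) • (1 : 𝒜))
      Filter.atTop (nhds (CFC.sqrt b)) := by
    have h0 : Filter.Tendsto (fun n : ℕ => (1 / ((n : ℝ) + 1))) Filter.atTop (nhds 0) :=
      tendsto_one_div_add_atTop_nhds_zero_nat
    have := (h0.smul_const (1 : 𝒜)).const_add (CFC.sqrt b)
    simpa using this
  exact ge_of_tendsto' lim fun n => key _ (by positivity)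

end SqrtMono

/-- Pull-out estimate (two-term version): for bounded positive self-adjoint operators
A, B on a Hilbert space and a bounded self-adjoint g with 0 ≤ g ≤ 1 and h = √(1 − g²),
one has √(gAg + hBh) ≥ g√A g + h√B h. -/
theorem stmt_2 {H : Type*} [NormedAddCommGroup H] [InnerProductSpace ℂ H]
    [CompleteSpace H] (A B g : H →L[ℂ] H)
    (hA : IsSelfAdjoint A) (hApos : 0 ≤ A)
    (hB : IsSelfAdjoint B) (hBpos : 0 ≤ B)
    (hg : IsSelfAdjoint g) (hgpos : 0 ≤ g) (hg1 : g ≤ 1) :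
    g * CFC.sqrt A * g + CFC.sqrt (1 - g * g) * CFC.sqrt B * CFC.sqrt (1 - g * g)
      ≤ CFC.sqrt (g * A * g + CFC.sqrt (1 - g * g) * B * CFC.sqrt (1 - g * g)) := by
  set h : H →L[ℂ] H := CFC.sqrt (1 - g * g) with hh_def
  -- `g * g ≤ 1`
  have hgnorm : ‖g‖ ≤ 1 := (CStarAlgebra.norm_le_one_iff_of_nonneg g hgpos).mpr hg1
  have hgg1 : g * g ≤ 1 := by
    calc g * g = g * star g := by rw [hg.star_eq]
      _ ≤ algebraMap ℝ (H →L[ℂ] H) (‖g‖ ^ 2) := CStarAlgebra.mul_star_le_algebraMap_norm_sq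
      _ ≤ 1 := by
          rw [Algebra.algebraMap_eq_smul_one]
          have hnn : (0 : H →L[ℂ] H) ≤ (1 - ‖g‖ ^ 2) • 1 :=
            smul_nonneg (by nlinarith [norm_nonneg g]) zero_le_one
          calc (‖g‖ ^ 2) • (1 : H →L[ℂ] H) ≤ ‖g‖ ^ 2 • 1 + (1 - ‖g‖ ^ 2) • 1 :=
                le_add_of_nonneg_right hnn
            _ = 1 := by module
  have hgg : (0 : H →L[ℂ] H) ≤ 1 - g * g := sub_nonneg.mpr hgg1
  have hhnn : (0 : H →L[ℂ] H) ≤ h := (CFC.sqrt_nonneg _)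
  have hhsa : IsSelfAdjoint h := .of_nonneg hhnn
  have hhh : h * h = 1 - g * g := CFC.sqrt_mul_sqrt_self _ hgg
  -- `g` and `h` commute
  have hgh : g * h = h * g := by
    have e1 : (1 : H →L[ℂ] H) - g * g = cfc (fun x : ℝ => 1 - x * x) g := by
      rw [cfc_sub (fun _ : ℝ => (1 : ℝ)) (fun x : ℝ => x * x) g, cfc_const_one ℝ g,
        cfc_mul (fun x : ℝ => x) (fun x : ℝ => x) g, cfc_id' ℝ g]
    have e2 : h = cfc (fun x : ℝ => Real.sqrt (1 - x * x)) g := by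
      rw [hh_def, CFC.sqrt_eq_cfc, cfc_nnreal_eq_real NNReal.sqrt _ hgg, e1,
        ← cfc_comp (fun x : ℝ => ((NNReal.sqrt x.toNNReal : ℝ≥0) : ℝ)) (fun x : ℝ => 1 - x * x) g
          hg (hg := (NNReal.continuous_coe.comp (NNReal.continuous_sqrt.comp continuous_real_toNNReal)).continuousOn) (hf := by fun_prop)]
      exact cfc_congr fun x _ => by rw [Real.sqrt]; rfl
    have hcomm := cfc_commute_cfc (R := ℝ) id (fun x : ℝ => Real.sqrt (1 - x * x)) g
    rw [cfc_id ℝ g] at hcomm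
    rw [e2]
    exact hcomm.eq
  -- abbreviations
  set S : H →L[ℂ] H := CFC.sqrt A with hS_def
  set S' : H →L[ℂ] H := CFC.sqrt B with hS'_def
  have hSnn : (0 : H →L[ℂ] H) ≤ S := (CFC.sqrt_nonneg _)
  have hS'nn : (0 : H →L[ℂ] H) ≤ S' := (CFC.sqrt_nonneg _)
  have hSsa : IsSelfAdjoint S := .of_nonneg hSnn
  have hS'sa : IsSelfAdjoint S' := .of_nonneg hS'nn
  have hSS : S * S = A := CFC.sqrt_mul_sqrt_self A hApos
  have hS'S' : S' * S' = B := CFC.sqrt_mul_sqrt_self B hBpos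
  set T : H →L[ℂ] H := g * S * g + h * S' * h with hT_def
  set D : H →L[ℂ] H := g * A * g + h * B * h with hD_def
  have hTnn : (0 : H →L[ℂ] H) ≤ T := by
    have t1 : (0 : H →L[ℂ] H) ≤ g * S * g := by
      have := star_left_conjugate_nonneg hSnn g
      rwa [hg.star_eq] at this
    have t2 : (0 : H →L[ℂ] H) ≤ h * S' * h := by
      have := star_left_conjugate_nonneg hS'nn h
      rwa [hhsa.star_eq] at this
    exact add_nonneg t1 t2
  have hTsa : IsSelfAdjoint T := .of_nonneg hTnn
  have hTTnn : (0 : H →L[ℂ] H) ≤ T * T := by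
    simpa [hTsa.star_eq] using star_mul_self_nonneg T
  -- the key algebraic identity
  set P : H →L[ℂ] H := g * S * h with hP_def
  set Q : H →L[ℂ] H := h * S' * g with hQ_def
  have hsP : star P = h * S * g := by
    rw [hP_def]
    simp only [star_mul, hg.star_eq, hSsa.star_eq, hhsa.star_eq]
    noncomm_ring
  have hsQ : star Q = g * S' * h := by
    rw [hQ_def]
    simp only [star_mul, hg.star_eq, hS'sa.star_eq, hhsa.star_eq]
    noncomm_ring
  have key : T * T + (P - Q) * star (P - Q) = D := by
    rw [star_sub, hsP, hsQ, hT_def, hD_def, hP_def, hQ_def, ← hSS, ← hS'S']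
    calc (g * S * g + h * S' * h) * (g * S * g + h * S' * h)
          + (g * S * h - h * S' * g) * (h * S * g - g * S' * h)
        = g * S * (g * g) * (S * g) + g * S * (h * h) * (S * g)
            + h * S' * (h * h) * (S' * h) + h * S' * (g * g) * (S' * h)
            + (g * S * (g * h) * (S' * h) - g * S * (h * g) * (S' * h))
            + (h * S' * (h * g) * (S * g) - h * S' * (g * h) * (S * g)) := by
          noncomm_ring
      _ = g * (S * S) * g + h * (S' * S') * h := by
          rw [hhh, hgh]
          noncomm_ring
  have hTTD : T * T ≤ D := by
    calc T * T ≤ T * T + (P - Q) * star (P - Q) :=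
          le_add_of_nonneg_right (mul_star_self_nonneg _)
      _ = D := key
  calc T = CFC.sqrt (T * T) := (CFC.sqrt_mul_self T hTnn).symm
    _ ≤ CFC.sqrt D := my_sqrt_le_sqrt hTTnn hTTD
end

section
/- Let P and Q be positive (self-adjoint, nonnegative) operators on a Hilbert space such that [P² − Q²]₋, the negative part of P² − Q², is trace class with trace tr[−(P²−Q²)₋]. Then tr (P − Q)₋ ≥ − tr ( [−(P² − Q²)₋] )^{1/2}, i.e., the sum of the negative eigenvalues of P − Q is bounded below by minus the sum of square roots of the negative eigenvalues of P² − Q². -/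
open Matrix ComplexOrder

namespace BKSaux

variable {m : Type*} [Fintype m] [DecidableEq m]

/-- functional calculus for a hermitian complex matrix -/
noncomputable def fc {A : Matrix m m ℂ} (hA : A.IsHermitian) (f : ℝ → ℝ) : Matrix m m ℂ :=
  (hA.eigenvectorUnitary : Matrix m m ℂ) *
    diagonal (fun i => (f (hA.eigenvalues i) : ℂ)) *
    (star hA.eigenvectorUnitary : Matrix m m ℂ)

variable {A : Matrix m m ℂ} (hA : A.IsHermitian) (f g : ℝ → ℝ)

lemma fc_mul : fc hA f * fc hA g = fc hA (fun t => f t * g t) := by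
  unfold fc
  have h1 : (star hA.eigenvectorUnitary : Matrix m m ℂ) *
      (hA.eigenvectorUnitary : Matrix m m ℂ) = 1 := by
    exact_mod_cast Unitary.coe_star_mul_self hA.eigenvectorUnitary
  rw [show ∀ (U V : Matrix m m ℂ) (D E : Matrix m m ℂ),
      U * D * V * (U * E * V) = U * (D * ((V * U) * E)) * V from fun U V D E => by
    noncomm_ring, h1, one_mul, diagonal_mul_diagonal]
  congr 2
  funext i
  push_cast
  ring

lemma fc_congr (h : ∀ i, f (hA.eigenvalues i) = g (hA.eigenvalues i)) : fc hA f = fc hA g := by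
  unfold fc
  congr 2
  ext i j
  by_cases hij : i = j <;> simp [diagonal, hij, h]

lemma fc_id : fc hA (fun t => t) = A := by
  simpa [fc, Function.comp_def] using hA.spectral_theorem.symm

lemma fc_one : fc hA (fun _ => 1) = 1 := by
  unfold fc
  have h1 : (hA.eigenvectorUnitary : Matrix m m ℂ) *
      (star hA.eigenvectorUnitary : Matrix m m ℂ) = 1 := by
    exact_mod_cast Unitary.coe_mul_star_self hA.eigenvectorUnitary
  simpa using h1

lemma fc_add : fc hA f + fc hA g = fc hA (fun t => f t + g t) := by
  unfold fc
  rw [← add_mul, ← mul_add, diagonal_add]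
  congr 2
  funext i
  push_cast
  rfl

lemma fc_sub : fc hA f - fc hA g = fc hA (fun t => f t - g t) := by
  unfold fc
  rw [← sub_mul, ← mul_sub, diagonal_sub]
  congr 2
  funext i
  push_cast
  rfl

lemma fc_herm : (fc hA f).IsHermitian := by
  have hd : (diagonal fun i => (f (hA.eigenvalues i) : ℂ))ᴴ
      = diagonal fun i => (f (hA.eigenvalues i) : ℂ) := by
    rw [diagonal_conjTranspose, show (star fun i => ((f (hA.eigenvalues i) : ℝ) : ℂ))
      = fun i => ((f (hA.eigenvalues i) : ℝ) : ℂ) from funext fun i => Complex.conj_ofReal _]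
  unfold fc
  rw [IsHermitian, star_eq_conjTranspose, conjTranspose_mul, conjTranspose_mul,
    conjTranspose_conjTranspose, hd, mul_assoc]

lemma fc_psd (h : ∀ i, 0 ≤ f (hA.eigenvalues i)) : (fc hA f).PosSemidef := by
  unfold fc
  rw [star_eq_conjTranspose]
  exact (PosSemidef.diagonal (Pi.le_def.mpr fun i =>
    Complex.zero_le_real.mpr (h i))).mul_mul_conjTranspose_same _

lemma fc_trace : (fc hA f).trace = ((∑ i, f (hA.eigenvalues i) : ℝ) : ℂ) := by
  unfold fc
  have h1 : (star hA.eigenvectorUnitary : Matrix m m ℂ) *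
      (hA.eigenvectorUnitary : Matrix m m ℂ) = 1 := by
    exact_mod_cast Unitary.coe_star_mul_self hA.eigenvectorUnitary
  rw [trace_mul_cycle, h1, one_mul, trace_diagonal]
  push_cast
  rfl

lemma fc_det : (fc hA f).det = ∏ i, (f (hA.eigenvalues i) : ℂ) := by
  unfold fc
  have h1 : (hA.eigenvectorUnitary : Matrix m m ℂ) *
      (star hA.eigenvectorUnitary : Matrix m m ℂ) = 1 := by
    exact_mod_cast Unitary.coe_mul_star_self hA.eigenvectorUnitary
  rw [det_mul_right_comm, h1, one_mul, det_diagonal]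


lemma trace_psd_nonneg {M : Matrix m m ℂ} (hM : M.PosSemidef) : 0 ≤ M.trace := by
  apply Finset.sum_nonneg
  intro i _
  have := hM.dotProduct_mulVec_nonneg (Pi.single i 1)
  simp [mulVec_single, dotProduct, Pi.single_apply] at this
  simpa using this

open scoped MatrixOrder in
lemma trace_mul_psd_nonneg {M N : Matrix m m ℂ} (hM : M.PosSemidef) (hN : N.PosSemidef) :
    0 ≤ (M * N).trace := by
  obtain ⟨C, rfl⟩ := (by exact CStarAlgebra.nonneg_iff_eq_star_mul_self.mp hN.nonneg :
    ∃ C : Matrix m m ℂ, N = Cᴴ * C)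
  rw [show M * (Cᴴ * C) = M * Cᴴ * C from by noncomm_ring, trace_mul_cycle]
  exact trace_psd_nonneg (hM.mul_mul_conjTranspose_same C)

lemma nonneg_of_mul_cpx {μ : ℝ} {z : ℂ} (hz : 0 ≤ z) (hz0 : z ≠ 0) (h : 0 ≤ (μ : ℂ) * z) :
    0 ≤ μ := by
  have him : z.im = 0 := ((Complex.le_def.mp hz).2).symm
  have hzre : 0 < z.re := by
    rcases lt_or_eq_of_le (Complex.le_def.mp hz).1 with h' | h'
    · simpa using h'
    · exact absurd (Complex.ext h'.symm him) hz0
  have hre := (Complex.le_def.mp h).1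
  rw [Complex.zero_re, Complex.re_ofReal_mul] at hre
  nlinarith

lemma eig_pos_of_det {M : Matrix m m ℂ} (hM : M.PosSemidef) (hd : M.det ≠ 0) (i : m) :
    0 < hM.1.eigenvalues i := by
  rcases lt_or_eq_of_le (hM.eigenvalues_nonneg i) with h | h
  · exact h
  · exfalso
    apply hd
    rw [hM.1.det_eq_prod_eigenvalues]
    exact Finset.prod_eq_zero (Finset.mem_univ i) (by rw [← h]; simp)

lemma eigvec_ne_zero {K : Matrix m m ℂ} (hK : K.IsHermitian) (i : m) :
    ⇑(hK.eigenvectorBasis i) ≠ 0 := by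
  intro h0
  have hnorm := hK.eigenvectorBasis.orthonormal.1 i
  have : hK.eigenvectorBasis i = 0 := by
    apply PiLp.ext
    intro j
    exact congrFun h0 j
  rw [this] at hnorm
  simp at hnorm

lemma one_le_eig {K : Matrix m m ℂ} (hK : K.IsHermitian) (h : (K - 1).PosSemidef) (i : m) :
    1 ≤ hK.eigenvalues i := by
  set v := ⇑(hK.eigenvectorBasis i) with hv
  have hv0 : v ≠ 0 := eigvec_ne_zero hK i
  have hKv : K *ᵥ v = (hK.eigenvalues i) • v := hK.mulVec_eigenvectorBasis i
  have h2 := h.dotProduct_mulVec_nonneg v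
  have hrw : star v ⬝ᵥ (K - 1) *ᵥ v
      = ((hK.eigenvalues i - 1 : ℝ) : ℂ) * (star v ⬝ᵥ v) := by
    rw [sub_mulVec, dotProduct_sub, hKv, one_mulVec, dotProduct_smul,
      Complex.real_smul]
    push_cast
    ring
  rw [hrw] at h2
  have hc0 : star v ⬝ᵥ v ≠ 0 := fun hc => hv0 (dotProduct_star_self_eq_zero.mp hc)
  have hcnn : 0 ≤ star v ⬝ᵥ v := dotProduct_star_self_nonneg v
  linarith [nonneg_of_mul_cpx hcnn hc0 h2]

lemma fc_sqrt_sq {M : Matrix m m ℂ} (hM : M.PosSemidef) :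
    fc hM.1 Real.sqrt * fc hM.1 Real.sqrt = M := by
  rw [fc_mul, fc_congr hM.1 _ (fun t => t)
    (fun i => Real.mul_self_sqrt (hM.eigenvalues_nonneg i)), fc_id]

lemma fc_sqrt_psd {M : Matrix m m ℂ} (hM : M.PosSemidef) : (fc hM.1 Real.sqrt).PosSemidef :=
  fc_psd _ _ fun i => Real.sqrt_nonneg _

open scoped MatrixOrder in
lemma fc_sqrt_unique {M R : Matrix m m ℂ} (hM : M.PosSemidef) (hR : R.PosSemidef)
    (h : R * R = M) : fc hM.1 Real.sqrt = R :=
  (CFC.sq_eq_sq_iff (A := Matrix m m ℂ) _ _ (fc_sqrt_psd hM).nonneg hR.nonneg).mp (by rw [pow_two, pow_two, fc_sqrt_sq hM, h])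

lemma sqrt_mono {X Y : Matrix m m ℂ} (hX : X.PosSemidef) (hY : Y.PosSemidef)
    (hYX : (Y - X).PosSemidef) :
    (fc hY.1 Real.sqrt - fc hX.1 Real.sqrt).PosSemidef := by
  set S := fc hY.1 Real.sqrt with hSdef
  set T := fc hX.1 Real.sqrt with hTdef
  have hS : S.PosSemidef := fc_sqrt_psd hY
  have hT : T.PosSemidef := fc_sqrt_psd hX
  have hSS : S * S = Y := fc_sqrt_sq hY
  have hTT : T * T = X := fc_sqrt_sq hX
  have hST : (S - T).IsHermitian := hS.1.sub hT.1
  apply hST.posSemidef_iff_eigenvalues_nonneg.mpr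
  intro i
  set μ := hST.eigenvalues i with hμ
  set v := ⇑(hST.eigenvectorBasis i) with hv
  have hv0 : v ≠ 0 := eigvec_ne_zero hST i
  have hmv : (S - T) *ᵥ v = μ • v := hST.mulVec_eigenvectorBasis i
  have hsplit : Y - X = S * (S - T) + (S - T) * T := by
    rw [← hSS, ← hTT]; noncomm_ring
  have hterm1 : star v ⬝ᵥ (S * (S - T)) *ᵥ v = (μ : ℂ) * (star v ⬝ᵥ S *ᵥ v) := by
    rw [← mulVec_mulVec, hmv, mulVec_smul, dotProduct_smul, Complex.real_smul]
  have hvm : star v ᵥ* (S - T) = μ • star v := by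
    have h' : star ((S - T) *ᵥ v) = star v ᵥ* (S - T) := by
      rw [star_mulVec, hST.eq]
    rw [← h', hmv, star_smul, star_trivial]
  have hterm2 : star v ⬝ᵥ ((S - T) * T) *ᵥ v = (μ : ℂ) * (star v ⬝ᵥ T *ᵥ v) := by
    rw [← mulVec_mulVec, dotProduct_mulVec, hvm, smul_dotProduct, Complex.real_smul]
  have key : star v ⬝ᵥ (Y - X) *ᵥ v
      = (μ : ℂ) * (star v ⬝ᵥ S *ᵥ v + star v ⬝ᵥ T *ᵥ v) := by
    rw [hsplit, add_mulVec, dotProduct_add, hterm1, hterm2, mul_add]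
  have hkey2 := hYX.dotProduct_mulVec_nonneg v
  rw [key] at hkey2
  have ha : 0 ≤ star v ⬝ᵥ S *ᵥ v := hS.dotProduct_mulVec_nonneg v
  have hb : 0 ≤ star v ⬝ᵥ T *ᵥ v := hT.dotProduct_mulVec_nonneg v
  by_cases hab : star v ⬝ᵥ S *ᵥ v + star v ⬝ᵥ T *ᵥ v = 0
  · have ha0 : star v ⬝ᵥ S *ᵥ v = 0 :=
      le_antisymm (by rw [add_comm, add_eq_zero_iff_eq_neg] at hab
                      simpa only [hab, neg_nonneg] using hb) ha
    have hb0 : star v ⬝ᵥ T *ᵥ v = 0 :=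
      le_antisymm (by simpa only [add_eq_zero_iff_eq_neg.mp hab, neg_nonneg] using ha) hb
    have hSv : S *ᵥ v = 0 := (hS.dotProduct_mulVec_zero_iff v).mp ha0
    have hTv : T *ᵥ v = 0 := (hT.dotProduct_mulVec_zero_iff v).mp hb0
    have : μ • v = 0 := by rw [← hmv, sub_mulVec, hSv, hTv, sub_zero]
    rcases smul_eq_zero.mp this with h0 | h0
    · exact le_of_eq h0.symm
    · exact absurd h0 hv0
  · exact nonneg_of_mul_cpx (add_nonneg ha hb) hab hkey2


lemma fc_mul_matrix {A : Matrix m m ℂ} (hA : A.IsHermitian) (f : ℝ → ℝ) :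
    fc hA f * A = fc hA (fun t => f t * t) :=
  calc fc hA f * A = fc hA f * fc hA (fun t => t) := by rw [fc_id]
    _ = fc hA (fun t => f t * t) := fc_mul hA f _

lemma matrix_mul_fc {A : Matrix m m ℂ} (hA : A.IsHermitian) (f : ℝ → ℝ) :
    A * fc hA f = fc hA (fun t => t * f t) :=
  calc A * fc hA f = fc hA (fun t => t) * fc hA f := by rw [fc_id]
    _ = fc hA (fun t => t * f t) := fc_mul hA _ f

lemma inv_antimono {A B : Matrix m m ℂ} (hA : A.PosSemidef) (hB : B.PosSemidef)
    (hdA : A.det ≠ 0) (hdB : B.det ≠ 0) (hBA : (B - A).PosSemidef) :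
    (fc hA.1 (fun t => t⁻¹) - fc hB.1 (fun t => t⁻¹)).PosSemidef := by
  have hlA : ∀ i, 0 < hA.1.eigenvalues i := eig_pos_of_det hA hdA
  have hlB : ∀ i, hB.1.eigenvalues i ≠ 0 := fun i => ne_of_gt (eig_pos_of_det hB hdB i)
  set W := fc hA.1 (fun t => (Real.sqrt t)⁻¹) with hWdef
  set W' := fc hA.1 Real.sqrt with hW'def
  have hWpsd : W.PosSemidef := by
    rw [hWdef]; exact fc_psd _ _ fun i => inv_nonneg.mpr (Real.sqrt_nonneg _)
  have hsA : ∀ i, Real.sqrt (hA.1.eigenvalues i) ≠ 0 :=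
    fun i => ne_of_gt (Real.sqrt_pos.mpr (hlA i))
  have hWW' : W * W' = 1 := by
    rw [hWdef, hW'def, fc_mul, fc_congr hA.1 _ (fun _ => 1)
      (fun i => inv_mul_cancel₀ (hsA i)), fc_one]
  have hW'W : W' * W = 1 := by
    rw [hWdef, hW'def, fc_mul, fc_congr hA.1 _ (fun _ => 1)
      (fun i => mul_inv_cancel₀ (hsA i)), fc_one]
  have hAW' : A = W' * W' := by rw [hW'def]; exact (fc_sqrt_sq hA).symm
  have hWAW : W * A * W = 1 := by
    rw [hAW', show W * (W' * W') * W = W * W' * (W' * W) from by noncomm_ring, hWW', hW'W,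
      one_mul]
  set K := W * B * W with hKdef
  have hK1 : (K - 1).PosSemidef := by
    have h2 := hBA.mul_mul_conjTranspose_same W
    rw [hWpsd.1] at h2
    have h3 : W * (B - A) * W = K - 1 := by
      rw [hKdef, ← hWAW]; noncomm_ring
    rwa [h3] at h2
  have hKher : K.IsHermitian := by
    have := (hK1.add (PosSemidef.one : (1 : Matrix m m ℂ).PosSemidef)).1
    rwa [sub_add_cancel] at this
  have hl1 : ∀ i, 1 ≤ hKher.eigenvalues i := one_le_eig hKher hK1
  have hKeig0 : ∀ i, hKher.eigenvalues i ≠ 0 :=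
    fun i => ne_of_gt (lt_of_lt_of_le zero_lt_one (hl1 i))
  set K' := fc hKher (fun t => t⁻¹) with hK'def
  have hKK' : K * K' = 1 := by
    rw [hK'def, matrix_mul_fc hKher, fc_congr hKher _ (fun _ => 1)
      (fun i => mul_inv_cancel₀ (hKeig0 i)), fc_one]
  have hK'K : K' * K = 1 := by
    rw [hK'def, fc_mul_matrix hKher, fc_congr hKher _ (fun _ => 1)
      (fun i => inv_mul_cancel₀ (hKeig0 i)), fc_one]
  have h1K' : (1 - K').PosSemidef := by
    rw [hK'def, ← fc_one hKher, fc_sub]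
    exact fc_psd _ _ fun i => sub_nonneg.mpr (inv_le_one_of_one_le₀ (hl1 i))
  have hB'K : W' * K * W' = B := by
    rw [hKdef, show W' * (W * B * W) * W' = (W' * W) * B * (W * W') from by noncomm_ring,
      hW'W, hWW', one_mul, mul_one]
  have hBBinv : B * (W * K' * W) = 1 := by
    rw [← hB'K, show (W' * K * W') * (W * K' * W) = W' * (K * ((W' * W) * K')) * W from by
      noncomm_ring, hW'W, one_mul, hKK', mul_one, hW'W]
  have hfcB : fc hB.1 (fun t => t⁻¹) = W * K' * W := by
    have h1 : fc hB.1 (fun t => t⁻¹) * B = 1 := by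
      rw [fc_mul_matrix hB.1, fc_congr hB.1 _ (fun _ => 1)
        (fun i => inv_mul_cancel₀ (hlB i)), fc_one]
    calc fc hB.1 (fun t => t⁻¹) = fc hB.1 (fun t => t⁻¹) * (B * (W * K' * W)) := by
          rw [hBBinv, mul_one]
      _ = (fc hB.1 (fun t => t⁻¹) * B) * (W * K' * W) := (mul_assoc _ _ _).symm
      _ = W * K' * W := by rw [h1, one_mul]
  have hfcA : fc hA.1 (fun t => t⁻¹) = W * W := by
    rw [hWdef, fc_mul]
    exact fc_congr hA.1 _ _ fun i => by
      rw [← mul_inv, Real.mul_self_sqrt (hlA i).le]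
  have hgoal : W * (1 - K') * W = fc hA.1 (fun t => t⁻¹) - fc hB.1 (fun t => t⁻¹) := by
    rw [hfcA, hfcB, mul_sub, mul_one, sub_mul]
  rw [← hgoal]
  have := h1K'.mul_mul_conjTranspose_same W
  rwa [hWpsd.1] at this


lemma psd_det_posdef {M : Matrix m m ℂ} (hM : M.PosSemidef) (hd : M.det ≠ 0) : M.PosDef := by
  refine PosDef.of_dotProduct_mulVec_pos hM.1 fun x hx => ?_
  rcases lt_or_eq_of_le (hM.dotProduct_mulVec_nonneg x) with h | h
  · exact h
  · exfalso
    exact hd (Matrix.exists_mulVec_eq_zero_iff.mp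
      ⟨x, hx, (hM.dotProduct_mulVec_zero_iff x).mp h.symm⟩)

lemma posdef_det_ne_zero {M : Matrix m m ℂ} (hM : M.PosDef) : M.det ≠ 0 := by
  intro h
  obtain ⟨v, hv, hMv⟩ := Matrix.exists_mulVec_eq_zero_iff.mpr h
  have := hM.dotProduct_mulVec_pos hv
  rw [hMv, dotProduct_zero] at this
  exact lt_irrefl _ this

lemma posdef_add_psd {X Y : Matrix m m ℂ} (hX : X.PosDef) (hY : Y.PosSemidef) :
    (X + Y).PosDef :=
  PosDef.of_dotProduct_mulVec_pos (hX.1.add hY.1) fun x hx => by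
    rw [add_mulVec, dotProduct_add]
    exact add_pos_of_pos_of_nonneg (hX.dotProduct_mulVec_pos hx) (hY.dotProduct_mulVec_nonneg x)

lemma sum_sqrt_mono {X Y : Matrix m m ℂ} (hX : X.PosSemidef) (hY : Y.PosSemidef)
    (hYX : (Y - X).PosSemidef) :
    ∑ i, Real.sqrt (hX.1.eigenvalues i) ≤ ∑ i, Real.sqrt (hY.1.eigenvalues i) := by
  have h := trace_psd_nonneg (sqrt_mono hX hY hYX)
  rw [trace_sub, fc_trace, fc_trace, sub_nonneg] at h
  exact_mod_cast h

lemma sum_sqrt_shift {X : Matrix m m ℂ} (hX : X.PosSemidef) {ε : ℝ} (hε : 0 ≤ ε)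
    (hXε : (fc hX.1 (fun t => t + ε)).PosSemidef) :
    ∑ i, Real.sqrt (hXε.1.eigenvalues i) = ∑ i, Real.sqrt (hX.1.eigenvalues i + ε) := by
  have hRR : fc hX.1 (fun t => Real.sqrt (t + ε)) * fc hX.1 (fun t => Real.sqrt (t + ε))
      = fc hX.1 (fun t => t + ε) := by
    rw [fc_mul]
    exact fc_congr hX.1 _ _ fun i =>
      Real.mul_self_sqrt (add_nonneg (hX.eigenvalues_nonneg i) hε)
  have hR : (fc hX.1 (fun t => Real.sqrt (t + ε))).PosSemidef :=
    fc_psd _ _ fun i => Real.sqrt_nonneg _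
  have h2 := congrArg Matrix.trace (fc_sqrt_unique hXε hR hRR)
  rw [fc_trace, fc_trace] at h2
  exact_mod_cast h2

lemma sqrt_add_le (x ε : ℝ) (hx : 0 ≤ x) (hε : 0 ≤ ε) :
    Real.sqrt (x + ε) ≤ Real.sqrt x + Real.sqrt ε := by
  have h := Real.sqrt_le_sqrt (show x + ε ≤ (Real.sqrt x + Real.sqrt ε) ^ 2 by
    nlinarith [Real.sq_sqrt hx, Real.sq_sqrt hε, Real.sqrt_nonneg x, Real.sqrt_nonneg ε])
  rwa [Real.sqrt_sq (by positivity)] at h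

lemma subadd_det {X Y : Matrix m m ℂ} (hX : X.PosSemidef) (hY : Y.PosSemidef)
    (hXY : (X + Y).PosSemidef) (hdX : X.det ≠ 0) (hdY : Y.det ≠ 0) (hdXY : (X + Y).det ≠ 0) :
    ∑ i, Real.sqrt (hXY.1.eigenvalues i)
      ≤ ∑ i, Real.sqrt (hX.1.eigenvalues i) + ∑ i, Real.sqrt (hY.1.eigenvalues i) := by
  set S := fc hXY.1 Real.sqrt with hSdef
  have hSpsd : S.PosSemidef := by rw [hSdef]; exact fc_sqrt_psd hXY
  have hSS : S * S = X + Y := by rw [hSdef]; exact fc_sqrt_sq hXY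
  have hdS : S.det ≠ 0 := by
    rw [hSdef, fc_det]
    exact Finset.prod_ne_zero_iff.mpr fun i _ =>
      Complex.ofReal_ne_zero.mpr (ne_of_gt (Real.sqrt_pos.mpr (eig_pos_of_det hXY hdXY i)))
  have hlS : ∀ i, hSpsd.1.eigenvalues i ≠ 0 := fun i => ne_of_gt (eig_pos_of_det hSpsd hdS i)
  set Sinv := fc hSpsd.1 (fun t => t⁻¹) with hSinvdef
  have hSinvpsd : Sinv.PosSemidef := by
    rw [hSinvdef]
    exact fc_psd _ _ fun i => inv_nonneg.mpr (hSpsd.eigenvalues_nonneg i)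
  have hSSinv : S * Sinv = 1 := by
    rw [hSinvdef, matrix_mul_fc hSpsd.1, fc_congr hSpsd.1 _ (fun _ => 1)
      (fun i => mul_inv_cancel₀ (hlS i)), fc_one]
  have htrS : S.trace = (X * Sinv).trace + (Y * Sinv).trace := by
    rw [← trace_add]
    congr 1
    rw [← add_mul, ← hSS, mul_assoc, hSSinv, mul_one]
  have hgen : ∀ (Z : Matrix m m ℂ) (hZ : Z.PosSemidef), Z.det ≠ 0 →
      ((X + Y) - Z).PosSemidef →
      (Z * Sinv).trace ≤ ((∑ i, Real.sqrt (hZ.1.eigenvalues i) : ℝ) : ℂ) := by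
    intro Z hZ hdZ hrest
    set T := fc hZ.1 Real.sqrt with hTdef
    have hTpsd : T.PosSemidef := by rw [hTdef]; exact fc_sqrt_psd hZ
    have hTT : T * T = Z := by rw [hTdef]; exact fc_sqrt_sq hZ
    have hdT : T.det ≠ 0 := by
      rw [hTdef, fc_det]
      exact Finset.prod_ne_zero_iff.mpr fun i _ =>
        Complex.ofReal_ne_zero.mpr (ne_of_gt (Real.sqrt_pos.mpr (eig_pos_of_det hZ hdZ i)))
    have hlT : ∀ i, hTpsd.1.eigenvalues i ≠ 0 := fun i => ne_of_gt (eig_pos_of_det hTpsd hdT i)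
    have hST : (S - T).PosSemidef := by
      rw [hSdef, hTdef]; exact sqrt_mono hZ hXY hrest
    have hanti := inv_antimono hTpsd hSpsd hdT hdS hST
    set Tinv := fc hTpsd.1 (fun t => t⁻¹) with hTinvdef
    have hTTinv : T * Tinv = 1 := by
      rw [hTinvdef, matrix_mul_fc hTpsd.1, fc_congr hTpsd.1 _ (fun _ => 1)
        (fun i => mul_inv_cancel₀ (hlT i)), fc_one]
    have hZTinv : Z * Tinv = T := by rw [← hTT, mul_assoc, hTTinv, mul_one]
    have h0 : 0 ≤ (Z * (Tinv - Sinv)).trace := trace_mul_psd_nonneg hZ hanti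
    rw [mul_sub, trace_sub, sub_nonneg, hZTinv] at h0
    calc (Z * Sinv).trace ≤ T.trace := h0
      _ = _ := by rw [hTdef, fc_trace]
  have h1 := hgen X hX hdX (by rw [add_sub_cancel_left]; exact hY)
  have h2 := hgen Y hY hdY (by rw [add_sub_cancel_right]; exact hX)
  have h3 : S.trace = ((∑ i, Real.sqrt (hXY.1.eigenvalues i) : ℝ) : ℂ) := by
    rw [hSdef, fc_trace]
  have h4 : ((∑ i, Real.sqrt (hXY.1.eigenvalues i) : ℝ) : ℂ)
      ≤ ((∑ i, Real.sqrt (hX.1.eigenvalues i) + ∑ i, Real.sqrt (hY.1.eigenvalues i) : ℝ) : ℂ) := by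
    rw [← h3, htrS, Complex.ofReal_add]
    exact add_le_add h1 h2
  exact_mod_cast h4

set_option maxHeartbeats 2000000 in
lemma subadd_psd {X Y : Matrix m m ℂ} (hX : X.PosSemidef) (hY : Y.PosSemidef)
    (hXY : (X + Y).PosSemidef) :
    ∑ i, Real.sqrt (hXY.1.eigenvalues i)
      ≤ ∑ i, Real.sqrt (hX.1.eigenvalues i) + ∑ i, Real.sqrt (hY.1.eigenvalues i) := by
  apply le_of_forall_pos_le_add
  intro δ hδ
  set c : ℝ := 2 * (Fintype.card m) + 1 with hc
  have hcpos : (0:ℝ) < c := by rw [hc]; positivity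
  set ε : ℝ := (δ / c) ^ 2 with hε
  have hεpos : 0 < ε := by rw [hε]; positivity
  have hsqε : Real.sqrt ε = δ / c := by
    rw [hε, Real.sqrt_sq (le_of_lt (by positivity))]
  set Xε := fc hX.1 (fun t => t + ε) with hXεdef
  set Yε := fc hY.1 (fun t => t + ε) with hYεdef
  have hXεpsd : Xε.PosSemidef := by
    rw [hXεdef]; exact fc_psd _ _ fun i => add_nonneg (hX.eigenvalues_nonneg i) hεpos.le
  have hYεpsd : Yε.PosSemidef := by
    rw [hYεdef]; exact fc_psd _ _ fun i => add_nonneg (hY.eigenvalues_nonneg i) hεpos.le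
  have hdXε : Xε.det ≠ 0 := by
    rw [hXεdef, fc_det]
    exact Finset.prod_ne_zero_iff.mpr fun i _ => Complex.ofReal_ne_zero.mpr
      (ne_of_gt (add_pos_of_nonneg_of_pos (hX.eigenvalues_nonneg i) hεpos))
  have hdYε : Yε.det ≠ 0 := by
    rw [hYεdef, fc_det]
    exact Finset.prod_ne_zero_iff.mpr fun i _ => Complex.ofReal_ne_zero.mpr
      (ne_of_gt (add_pos_of_nonneg_of_pos (hY.eigenvalues_nonneg i) hεpos))
  have hXYεpsd : (Xε + Yε).PosSemidef := hXεpsd.add hYεpsd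
  have hdXYε : (Xε + Yε).det ≠ 0 :=
    posdef_det_ne_zero (posdef_add_psd (psd_det_posdef hXεpsd hdXε) hYεpsd)
  have hsub := subadd_det hXεpsd hYεpsd hXYεpsd hdXε hdYε hdXYε
  have h1 : Xε - X = fc hX.1 (fun _ => ε) := by
    rw [hXεdef]
    calc fc hX.1 (fun t => t + ε) - X = fc hX.1 (fun t => t + ε) - fc hX.1 (fun t => t) := by
          rw [fc_id]
      _ = fc hX.1 (fun t => (t + ε) - t) := fc_sub hX.1 _ _
      _ = fc hX.1 (fun _ => ε) := fc_congr hX.1 _ _ fun i => by ring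
  have h2 : Yε - Y = fc hY.1 (fun _ => ε) := by
    rw [hYεdef]
    calc fc hY.1 (fun t => t + ε) - Y = fc hY.1 (fun t => t + ε) - fc hY.1 (fun t => t) := by
          rw [fc_id]
      _ = fc hY.1 (fun t => (t + ε) - t) := fc_sub hY.1 _ _
      _ = fc hY.1 (fun _ => ε) := fc_congr hY.1 _ _ fun i => by ring
  have hdiff : ((Xε + Yε) - (X + Y)).PosSemidef := by
    have h3 : (Xε + Yε) - (X + Y) = (Xε - X) + (Yε - Y) := by abel
    rw [h3, h1, h2]
    exact (fc_psd _ _ fun _ => hεpos.le).add (fc_psd _ _ fun _ => hεpos.le)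
  have hmono : ∑ i, Real.sqrt (hXY.1.eigenvalues i)
      ≤ ∑ i, Real.sqrt (hXYεpsd.1.eigenvalues i) := sum_sqrt_mono hXY hXYεpsd hdiff
  have hshX : ∑ i, Real.sqrt (hXεpsd.1.eigenvalues i)
      = ∑ i, Real.sqrt (hX.1.eigenvalues i + ε) := sum_sqrt_shift hX hεpos.le hXεpsd
  have hshY : ∑ i, Real.sqrt (hYεpsd.1.eigenvalues i)
      = ∑ i, Real.sqrt (hY.1.eigenvalues i + ε) := sum_sqrt_shift hY hεpos.le hYεpsd
  have hptX : ∑ i, Real.sqrt (hX.1.eigenvalues i + ε)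
      ≤ ∑ i, Real.sqrt (hX.1.eigenvalues i) + (Fintype.card m) * Real.sqrt ε := by
    calc ∑ i, Real.sqrt (hX.1.eigenvalues i + ε)
        ≤ ∑ i, (Real.sqrt (hX.1.eigenvalues i) + Real.sqrt ε) :=
          Finset.sum_le_sum fun i _ => sqrt_add_le _ _ (hX.eigenvalues_nonneg i) hεpos.le
      _ = _ := by
          rw [Finset.sum_add_distrib, Finset.sum_const, Finset.card_univ, nsmul_eq_mul]
  have hptY : ∑ i, Real.sqrt (hY.1.eigenvalues i + ε)
      ≤ ∑ i, Real.sqrt (hY.1.eigenvalues i) + (Fintype.card m) * Real.sqrt ε := by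
    calc ∑ i, Real.sqrt (hY.1.eigenvalues i + ε)
        ≤ ∑ i, (Real.sqrt (hY.1.eigenvalues i) + Real.sqrt ε) :=
          Finset.sum_le_sum fun i _ => sqrt_add_le _ _ (hY.eigenvalues_nonneg i) hεpos.le
      _ = _ := by
          rw [Finset.sum_add_distrib, Finset.sum_const, Finset.card_univ, nsmul_eq_mul]
  have harith : 2 * (Fintype.card m : ℝ) * Real.sqrt ε ≤ δ := by
    have hn : (0:ℝ) ≤ (Fintype.card m : ℝ) := Nat.cast_nonneg _
    rw [hsqε, hc, ← mul_div_assoc, div_le_iff₀ (by positivity)]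
    nlinarith
  linarith

end BKSaux

attribute [irreducible] BKSaux.fc

open BKSaux in
set_option maxHeartbeats 2000000 in
/-- BKS inequality: for positive operators P, Q,
tr (P − Q)₋ ≥ − tr ([−(P² − Q²)₋])^{1/2}, i.e. the sum of the negative eigenvalues
of P − Q is bounded below by minus the sum of the square roots of the negative
eigenvalues of P² − Q². -/
theorem stmt_3 {n : ℕ} (P Q : Matrix (Fin n) (Fin n) ℂ)
    (hP : P.PosSemidef) (hQ : Q.PosSemidef)
    (hPQ : (P - Q).IsHermitian) (hPQ2 : (P ^ 2 - Q ^ 2).IsHermitian) :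
    ∑ i, min (hPQ.eigenvalues i) 0
      ≥ -∑ i, Real.sqrt (-(min (hPQ2.eigenvalues i) 0)) := by
  classical
  have hP2 : (P ^ 2).PosSemidef := hP.pow 2
  have hQ2 : (Q ^ 2).PosSemidef := hQ.pow 2
  set B := fc hPQ2 (fun t => -(min t 0)) with hBdef
  have hBpsd : B.PosSemidef := by
    rw [hBdef]
    exact fc_psd _ _ fun i => neg_nonneg.mpr (min_le_right _ _)
  have hDB : ((P ^ 2 - Q ^ 2) + B).PosSemidef := by
    have heq : (P ^ 2 - Q ^ 2) + B = fc hPQ2 (fun t => t + -(min t 0)) := by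
      rw [hBdef]
      calc (P ^ 2 - Q ^ 2) + fc hPQ2 (fun t => -(min t 0))
          = fc hPQ2 (fun t => t) + fc hPQ2 (fun t => -(min t 0)) := by rw [fc_id]
        _ = fc hPQ2 (fun t => t + -(min t 0)) := fc_add hPQ2 _ _
    rw [heq]
    refine fc_psd _ _ fun i => ?_
    rcases le_total (hPQ2.eigenvalues i) 0 with h | h
    · rw [min_eq_left h]; linarith
    · rw [min_eq_right h]; linarith
  set Z := P ^ 2 + B with hZdef
  have hZpsd : Z.PosSemidef := hP2.add hBpsd
  set S := fc hZpsd.1 Real.sqrt with hSdef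
  have hSpsd : S.PosSemidef := by rw [hSdef]; exact fc_sqrt_psd hZpsd
  have hsqP : fc hP2.1 Real.sqrt = P := fc_sqrt_unique hP2 hP (pow_two P).symm
  have hsqQ : fc hQ2.1 Real.sqrt = Q := fc_sqrt_unique hQ2 hQ (pow_two Q).symm
  have hZP2 : (Z - P ^ 2).PosSemidef := by
    rw [hZdef, add_sub_cancel_left]
    exact hBpsd
  have hCpsd : (S - P).PosSemidef := by
    have h := sqrt_mono hP2 hZpsd hZP2
    rwa [hsqP, ← hSdef] at h
  have hZQ2 : (Z - Q ^ 2).PosSemidef := by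
    have heq : Z - Q ^ 2 = (P ^ 2 - Q ^ 2) + B := by rw [hZdef]; abel
    rw [heq]
    exact hDB
  have hACpsd : (S - Q).PosSemidef := by
    have h := sqrt_mono hQ2 hZpsd hZQ2
    rwa [hsqQ, ← hSdef] at h
  set Pr := fc hPQ (fun t => if t < 0 then 1 else 0) with hPrdef
  have hPrpsd : Pr.PosSemidef := by
    rw [hPrdef]
    exact fc_psd _ _ fun i => by split_ifs <;> norm_num
  have hPr1psd : (1 - Pr).PosSemidef := by
    rw [hPrdef, ← fc_one hPQ, fc_sub]
    exact fc_psd _ _ fun i => by split_ifs <;> norm_num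
  have hAPi : ((P - Q) * Pr).trace = ((∑ i, min (hPQ.eigenvalues i) 0 : ℝ) : ℂ) := by
    rw [hPrdef, matrix_mul_fc hPQ, fc_congr hPQ _ (fun t => min t 0) (fun i => ?_), fc_trace]
    rcases lt_or_ge (hPQ.eigenvalues i) 0 with h | h
    · rw [if_pos h, mul_one, min_eq_left h.le]
    · rw [if_neg (not_lt.mpr h), mul_zero, min_eq_right h]
  have hsplit1 : ((P - Q) * Pr).trace + ((S - P) * Pr).trace = ((S - Q) * Pr).trace := by
    rw [← trace_add, ← add_mul, show (P - Q) + (S - P) = S - Q from by abel]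
  have ht2 : 0 ≤ ((S - Q) * Pr).trace := trace_mul_psd_nonneg hACpsd hPrpsd
  have hsplit2 : ((S - P) * Pr).trace + ((S - P) * (1 - Pr)).trace = (S - P).trace := by
    rw [← trace_add, ← mul_add,
      show Pr + (1 - Pr) = (1 : Matrix (Fin n) (Fin n) ℂ) from by abel, mul_one]
  have ht3 : 0 ≤ ((S - P) * (1 - Pr)).trace := trace_mul_psd_nonneg hCpsd hPr1psd
  have htrP : P.trace = ((∑ i, Real.sqrt (hP2.1.eigenvalues i) : ℝ) : ℂ) := by
    conv_lhs => rw [← hsqP]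
    exact fc_trace _ _
  have hsub := subadd_psd hP2 hBpsd hZpsd
  have hRB : fc hBpsd.1 Real.sqrt = fc hPQ2 (fun t => Real.sqrt (-(min t 0))) := by
    apply fc_sqrt_unique hBpsd (fc_psd hPQ2 (fun t => Real.sqrt (-(min t 0))) fun i => Real.sqrt_nonneg _)
    rw [fc_mul, hBdef]
    exact fc_congr hPQ2 _ _ fun i =>
      Real.mul_self_sqrt (neg_nonneg.mpr (min_le_right _ _))
  have hsumB : ∑ i, Real.sqrt (hBpsd.1.eigenvalues i)
      = ∑ i, Real.sqrt (-(min (hPQ2.eigenvalues i) 0)) := by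
    have h := congrArg Matrix.trace hRB
    rw [fc_trace, fc_trace] at h
    exact_mod_cast h
  have hCle : ((S - P) * Pr).trace
      ≤ ((∑ i, Real.sqrt (-(min (hPQ2.eigenvalues i) 0)) : ℝ) : ℂ) := by
    have e1 : ((S - P) * Pr).trace ≤ (S - P).trace := by
      rw [← hsplit2]
      exact le_add_of_nonneg_right ht3
    have e2 : (S - P).trace = ((∑ i, Real.sqrt (hZpsd.1.eigenvalues i)
        - ∑ i, Real.sqrt (hP2.1.eigenvalues i) : ℝ) : ℂ) := by
      rw [trace_sub, htrP, hSdef, fc_trace, ← Complex.ofReal_sub]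
    have e3 : (∑ i, Real.sqrt (hZpsd.1.eigenvalues i)
        - ∑ i, Real.sqrt (hP2.1.eigenvalues i) : ℝ)
        ≤ ∑ i, Real.sqrt (-(min (hPQ2.eigenvalues i) 0)) := by
      rw [← hsumB]
      linarith [hsub]
    calc ((S - P) * Pr).trace ≤ (S - P).trace := e1
      _ = _ := e2
      _ ≤ _ := by exact_mod_cast e3
  have hfin : ((-∑ i, Real.sqrt (-(min (hPQ2.eigenvalues i) 0)) : ℝ) : ℂ)
      ≤ ((∑ i, min (hPQ.eigenvalues i) 0 : ℝ) : ℂ) := by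
    have h5 : ((∑ i, min (hPQ.eigenvalues i) 0 : ℝ) : ℂ)
        = ((S - Q) * Pr).trace - ((S - P) * Pr).trace := by
      rw [← hsplit1, hAPi]; ring
    calc ((-∑ i, Real.sqrt (-(min (hPQ2.eigenvalues i) 0)) : ℝ) : ℂ)
        = 0 - ((∑ i, Real.sqrt (-(min (hPQ2.eigenvalues i) 0)) : ℝ) : ℂ) := by
          push_cast; ring
      _ ≤ ((S - Q) * Pr).trace - ((S - P) * Pr).trace := sub_le_sub ht2 hCle
      _ = _ := h5.symm
  exact_mod_cast hfin
end

section
/- Let X and Y be self-adjoint operators on a Hilbert space, each bounded from below, such that the negative parts [X]₋ and [Y]₋ are trace class. Then tr[X + Y]₋ ≥ tr[X]₋ + tr[Y]₋, where [Z]₋ = min(Z, 0) denotes the negative part and tr[Z]₋ is the (nonpositive) sum of the negative eigenvalues. -/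
open Matrix

variable {n : ℕ}

lemma trace_key (Z : Matrix (Fin n) (Fin n) ℂ) (hZ : Z.IsHermitian)
    (f : Fin n → ℝ) (U : Matrix.unitaryGroup (Fin n) ℂ) :
    trace (Z * ((U : Matrix (Fin n) (Fin n) ℂ) * diagonal (Complex.ofReal ∘ f)
        * (U : Matrix (Fin n) (Fin n) ℂ)ᴴ))
      = ∑ i, ∑ j, (hZ.eigenvalues i : ℂ) * (f j : ℂ)
          * Complex.normSq (((hZ.eigenvectorUnitary : Matrix (Fin n) (Fin n) ℂ)ᴴ
              * (U : Matrix (Fin n) (Fin n) ℂ)) i j) := by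
  set V : Matrix (Fin n) (Fin n) ℂ := (hZ.eigenvectorUnitary : Matrix (Fin n) (Fin n) ℂ) with hV
  set W : Matrix (Fin n) (Fin n) ℂ := Vᴴ * (U : Matrix (Fin n) (Fin n) ℂ) with hW
  have hstep : Z * ((U : Matrix (Fin n) (Fin n) ℂ) * diagonal (Complex.ofReal ∘ f)
        * (U : Matrix (Fin n) (Fin n) ℂ)ᴴ)
      = V * (diagonal (Complex.ofReal ∘ hZ.eigenvalues) * Vᴴ
          * ((U : Matrix (Fin n) (Fin n) ℂ) * diagonal (Complex.ofReal ∘ f)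
            * (U : Matrix (Fin n) (Fin n) ℂ)ᴴ)) := by
    conv_lhs => rw [hZ.spectral_theorem]
    simp only [Unitary.conjStarAlgAut_apply, star_eq_conjTranspose, ← hV, mul_assoc]
    rfl
  rw [hstep, trace_mul_comm]
  have hgrp : diagonal (Complex.ofReal ∘ hZ.eigenvalues) * Vᴴ
        * ((U : Matrix (Fin n) (Fin n) ℂ) * diagonal (Complex.ofReal ∘ f)
          * (U : Matrix (Fin n) (Fin n) ℂ)ᴴ) * V
      = diagonal (Complex.ofReal ∘ hZ.eigenvalues) * (W * diagonal (Complex.ofReal ∘ f) * Wᴴ) := by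
    simp only [hW, conjTranspose_mul, conjTranspose_conjTranspose, mul_assoc]
  rw [hgrp]
  rw [Matrix.trace]
  refine Finset.sum_congr rfl fun i _ => ?_
  rw [Matrix.diag_apply, diagonal_mul, mul_apply, Finset.mul_sum]
  refine Finset.sum_congr rfl fun j _ => ?_
  rw [mul_diagonal, conjTranspose_apply]
  simp only [Function.comp_apply, RCLike.star_def]
  linear_combination ((hZ.eigenvalues i : ℂ) * (f j : ℂ)) * Complex.mul_conj (W i j)

lemma row_normSq (W : Matrix (Fin n) (Fin n) ℂ) (hWU : W ∈ Matrix.unitaryGroup (Fin n) ℂ)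
    (i : Fin n) : ∑ j, Complex.normSq (W i j) = 1 := by
  have h : W * Wᴴ = 1 := by
    have := (Matrix.mem_unitaryGroup_iff).mp hWU
    simpa [star_eq_conjTranspose] using this
  have h2 : (W * Wᴴ) i i = (1 : Matrix (Fin n) (Fin n) ℂ) i i := by rw [h]
  rw [mul_apply] at h2
  simp only [conjTranspose_apply, RCLike.star_def, Complex.mul_conj, one_apply_eq] at h2
  exact_mod_cast (by push_cast at h2 ⊢; exact h2 : ((∑ j, Complex.normSq (W i j) : ℝ) : ℂ) = 1)

lemma key_le (Z : Matrix (Fin n) (Fin n) ℂ) (hZ : Z.IsHermitian)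
    (f : Fin n → ℝ) (hf0 : ∀ i, 0 ≤ f i) (hf1 : ∀ i, f i ≤ 1)
    (U : Matrix.unitaryGroup (Fin n) ℂ) :
    ∑ i, min (hZ.eigenvalues i) 0
      ≤ (trace (Z * ((U : Matrix (Fin n) (Fin n) ℂ) * diagonal (Complex.ofReal ∘ f)
        * (U : Matrix (Fin n) (Fin n) ℂ)ᴴ))).re := by
  rw [trace_key Z hZ f U]
  set W : Matrix (Fin n) (Fin n) ℂ :=
    (hZ.eigenvectorUnitary : Matrix (Fin n) (Fin n) ℂ)ᴴ * (U : Matrix (Fin n) (Fin n) ℂ) with hW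
  have hWmem : W ∈ Matrix.unitaryGroup (Fin n) ℂ := by
    rw [hW, ← star_eq_conjTranspose]
    exact mul_mem (Unitary.star_mem hZ.eigenvectorUnitary.2) U.2
  have hre : (∑ i, ∑ j, (hZ.eigenvalues i : ℂ) * (f j : ℂ) * (Complex.normSq (W i j) : ℂ)).re
      = ∑ i, ∑ j, hZ.eigenvalues i * f j * Complex.normSq (W i j) := by
    rw [Complex.re_sum]
    refine Finset.sum_congr rfl fun i _ => ?_
    rw [Complex.re_sum]
    refine Finset.sum_congr rfl fun j _ => ?_
    norm_cast
  rw [hre]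
  refine Finset.sum_le_sum fun i _ => ?_
  have hrow := row_normSq W hWmem i
  have hsum : ∑ j, hZ.eigenvalues i * f j * Complex.normSq (W i j)
      = hZ.eigenvalues i * ∑ j, f j * Complex.normSq (W i j) := by
    rw [Finset.mul_sum]; exact Finset.sum_congr rfl fun j _ => by ring
  rw [hsum]
  set g : ℝ := ∑ j, f j * Complex.normSq (W i j) with hg
  have hg0 : 0 ≤ g := Finset.sum_nonneg fun j _ =>
    mul_nonneg (hf0 j) (Complex.normSq_nonneg _)
  have hg1 : g ≤ 1 := by
    rw [hg, ← hrow]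
    exact Finset.sum_le_sum fun j _ => mul_le_of_le_one_left (Complex.normSq_nonneg _) (hf1 j)
  rcases le_or_gt 0 (hZ.eigenvalues i) with hl | hl
  · have : min (hZ.eigenvalues i) 0 = 0 := min_eq_right (by linarith)
    rw [this]; positivity
  · have : min (hZ.eigenvalues i) 0 = hZ.eigenvalues i := min_eq_left (by linarith)
    rw [this]; nlinarith

lemma key_eq (Z : Matrix (Fin n) (Fin n) ℂ) (hZ : Z.IsHermitian) :
    (trace (Z * ((hZ.eigenvectorUnitary : Matrix (Fin n) (Fin n) ℂ)
        * diagonal (Complex.ofReal ∘ fun i => if hZ.eigenvalues i < 0 then (1:ℝ) else 0)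
        * (hZ.eigenvectorUnitary : Matrix (Fin n) (Fin n) ℂ)ᴴ))).re
      = ∑ i, min (hZ.eigenvalues i) 0 := by
  rw [trace_key Z hZ _ hZ.eigenvectorUnitary]
  have hWone : (hZ.eigenvectorUnitary : Matrix (Fin n) (Fin n) ℂ)ᴴ
      * (hZ.eigenvectorUnitary : Matrix (Fin n) (Fin n) ℂ) = 1 := by
    have := (Matrix.mem_unitaryGroup_iff').mp hZ.eigenvectorUnitary.2
    simpa [star_eq_conjTranspose] using this
  rw [hWone]
  rw [Complex.re_sum]
  refine Finset.sum_congr rfl fun i _ => ?_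
  rw [Complex.re_sum]
  rw [Finset.sum_eq_single i]
  · rcases lt_or_ge (hZ.eigenvalues i) 0 with h | h
    · simp [h, min_eq_left h.le]
    · simp [not_lt.mpr h, min_eq_right h]
  · intro j _ hj
    simp [Matrix.one_apply_ne' hj]
  · intro h; exact absurd (Finset.mem_univ i) h

/-- Superadditivity of the trace of the negative part:
tr[X + Y]₋ ≥ tr[X]₋ + tr[Y]₋, where tr[Z]₋ is the sum of the negative
eigenvalues of the self-adjoint operator Z. -/
theorem stmt_8 {n : ℕ} (X Y : Matrix (Fin n) (Fin n) ℂ)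
    (hX : X.IsHermitian) (hY : Y.IsHermitian) (hXY : (X + Y).IsHermitian) :
    ∑ i, min (hXY.eigenvalues i) 0
      ≥ (∑ i, min (hX.eigenvalues i) 0) + ∑ i, min (hY.eigenvalues i) 0 := by
  set f : Fin n → ℝ := fun i => if hXY.eigenvalues i < 0 then (1:ℝ) else 0 with hf
  set P : Matrix (Fin n) (Fin n) ℂ :=
    (hXY.eigenvectorUnitary : Matrix (Fin n) (Fin n) ℂ) * diagonal (Complex.ofReal ∘ f)
      * (hXY.eigenvectorUnitary : Matrix (Fin n) (Fin n) ℂ)ᴴ with hP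
  have hsplit : (trace ((X + Y) * P)).re = (trace (X * P)).re + (trace (Y * P)).re := by
    rw [add_mul, trace_add, Complex.add_re]
  have heq : (trace ((X + Y) * P)).re = ∑ i, min (hXY.eigenvalues i) 0 := key_eq (X + Y) hXY
  have hf0 : ∀ i, 0 ≤ f i := fun i => by rw [hf]; dsimp only; split <;> norm_num
  have hf1 : ∀ i, f i ≤ 1 := fun i => by rw [hf]; dsimp only; split <;> norm_num
  have hXle : ∑ i, min (hX.eigenvalues i) 0 ≤ (trace (X * P)).re :=
    key_le X hX f hf0 hf1 hXY.eigenvectorUnitary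
  have hYle : ∑ i, min (hY.eigenvalues i) 0 ≤ (trace (Y * P)).re :=
    key_le Y hY f hf0 hf1 hXY.eigenvectorUnitary
  linarith
end

section
/- Let f(u) = min{ℓ(u)^{-1/2}, ℓ(u)^{-2}} and ℓ(u) as above with r = h^{3/2}, 0 < h < 1. Then ∫_{𝒬} ℓ(u)^{-3} · ℓ(u)^{2−1/11} f(u)^{4−1/11} du ≤ C r^{-1/22}, where 𝒬 = {u : |u| ≤ 2R, d(u) ≥ r/3} and R = h^{-1}, and C depends only on M and the points r_k. -/
open MeasureTheory Set Metric


local notation "E3" => EuclideanSpace ℝ (Fin 3)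

lemma aux_integrable {s : ℝ} (hs : 0 < s) (hs1 : s ≤ 1) :
    Integrable (fun x : EuclideanSpace ℝ (Fin 3) => max ‖x‖ s ^ (-(67 / 22) : ℝ)) := by
  have hcont : Continuous (fun x : E3 => max ‖x‖ s ^ (-(67 / 22) : ℝ)) := by
    apply Continuous.rpow_const (continuous_norm.max continuous_const)
    intro x
    exact Or.inl (lt_max_of_lt_right hs).ne'
  have hfin : (Module.finrank ℝ E3 : ℝ) < 67 / 22 := by
    simp [finrank_euclideanSpace]; norm_num
  refine ((integrable_one_add_norm (μ := volume) hfin).const_mul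
    ((s / 2) ^ (-(67 / 22) : ℝ))).mono' hcont.aestronglyMeasurable ?_
  refine Filter.Eventually.of_forall fun x => ?_
  have h0 : (0 : ℝ) < max ‖x‖ s := lt_max_of_lt_right hs
  have hn := norm_nonneg x
  rw [Real.norm_of_nonneg (Real.rpow_nonneg h0.le _)]
  have key : s / 2 * (1 + ‖x‖) ≤ max ‖x‖ s := by
    rcases le_total ‖x‖ s with h | h
    · rw [max_eq_right h]; nlinarith
    · rw [max_eq_left h]; nlinarith
  calc max ‖x‖ s ^ (-(67 / 22) : ℝ)
      ≤ (s / 2 * (1 + ‖x‖)) ^ (-(67 / 22) : ℝ) :=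
        Real.rpow_le_rpow_of_nonpos (by positivity) key (by norm_num)
    _ = (s / 2) ^ (-(67 / 22) : ℝ) * (1 + ‖x‖) ^ (-(67 / 22) : ℝ) :=
        Real.mul_rpow (by positivity) (by positivity)

lemma aux_value {s : ℝ} (hs : 0 < s) :
    ∫ x : EuclideanSpace ℝ (Fin 3), max ‖x‖ s ^ (-(67 / 22) : ℝ)
      = 67 * (volume (ball (0 : EuclideanSpace ℝ (Fin 3)) 1)).toReal
        * s ^ (-(1 : ℝ) / 22) := by
  rw [integral_fun_norm_addHaar (volume : Measure E3) (fun y => max y s ^ (-(67 / 22) : ℝ))]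
  have hdim : Module.finrank ℝ E3 = 3 := by simp [finrank_euclideanSpace]
  rw [hdim]
  have hsplit : Ioi (0 : ℝ) = Ioc 0 s ∪ Ioi s := (Ioc_union_Ioi_eq_Ioi hs.le).symm
  have h1 : IntegrableOn (fun y : ℝ => y ^ (3 - 1) • (max y s ^ (-(67 / 22) : ℝ))) (Ioc 0 s) := by
    have hc : IntegrableOn (fun y : ℝ => y ^ 2 * s ^ (-(67 / 22) : ℝ)) (Ioc 0 s) :=
      Continuous.integrableOn_Ioc (by continuity)
    refine hc.congr_fun (fun y hy => ?_) measurableSet_Ioc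
    simp only [smul_eq_mul, max_eq_right hy.2]
  have h2eq : ∀ y ∈ Ioi s, (fun y : ℝ => y ^ (3 - 1) • (max y s ^ (-(67 / 22) : ℝ))) y
      = y ^ (2 - 67 / 22 : ℝ) := by
    intro y hy
    have hy0 : (0 : ℝ) < y := hs.trans hy
    simp only [smul_eq_mul]
    rw [max_eq_left (le_of_lt hy), ← Real.rpow_natCast y (3 - 1), ← Real.rpow_add hy0]
    norm_num
  have h2 : IntegrableOn (fun y : ℝ => y ^ (3 - 1) • (max y s ^ (-(67 / 22) : ℝ))) (Ioi s) := by
    apply (IntegrableOn.congr_fun ?_ (fun y hy => (h2eq y hy).symm) measurableSet_Ioi)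
    exact integrableOn_Ioi_rpow_of_lt (by norm_num) hs
  rw [hsplit, setIntegral_union (Ioc_disjoint_Ioi le_rfl) measurableSet_Ioi h1 h2]
  have v1 : ∫ y in Ioc (0:ℝ) s, y ^ (3 - 1) • (max y s ^ (-(67 / 22) : ℝ))
      = s ^ (-(1:ℝ)/22) / 3 := by
    rw [setIntegral_congr_fun measurableSet_Ioc (g := fun y : ℝ => y ^ 2 * s ^ (-(67/22) : ℝ))
      (fun y hy => by simp only [smul_eq_mul, max_eq_right hy.2])]
    rw [integral_mul_const, ← intervalIntegral.integral_of_le hs.le, integral_pow]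
    norm_num
    rw [div_mul_eq_mul_div, ← Real.rpow_natCast s 3, ← Real.rpow_add hs]
    norm_num
  have v2 : ∫ y in Ioi s, y ^ (3 - 1) • (max y s ^ (-(67 / 22) : ℝ))
      = 22 * s ^ (-(1:ℝ)/22) := by
    rw [setIntegral_congr_fun measurableSet_Ioi h2eq, integral_Ioi_rpow_of_lt (by norm_num) hs]
    rw [show (2 - 67/22 + 1 : ℝ) = -(1/22) by norm_num]
    ring_nf
  rw [v1, v2, nsmul_eq_mul, smul_eq_mul]
  push_cast
  rw [measureReal_def]
  ring

theorem stmt_15 (M : ℕ) (hM : 0 < M) (rk : Fin M → EuclideanSpace ℝ (Fin 3)) :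
    ∃ C : ℝ, 0 < C ∧
      ∀ h : ℝ, 0 < h → h < 1 →
        ∀ (d ℓ f : EuclideanSpace ℝ (Fin 3) → ℝ),
          (∀ u, d u = ⨅ k : Fin M, dist u (rk k)) →
          (∀ u, ℓ u = (1 / 100) * Real.sqrt ((h ^ (3 / 2 : ℝ)) ^ 2 + d u ^ 2)) →
          (∀ u, f u = min (ℓ u ^ (-(1 : ℝ) / 2)) (ℓ u ^ (-2 : ℝ))) →
          ∫ u in {u : EuclideanSpace ℝ (Fin 3) |
                    ‖u‖ ≤ 2 * h⁻¹ ∧ h ^ (3 / 2 : ℝ) / 3 ≤ d u},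
              ℓ u ^ (-3 : ℝ) * (ℓ u ^ (2 - 1 / 11 : ℝ) * f u ^ (4 - 1 / 11 : ℝ))
            ≤ C * (h ^ (3 / 2 : ℝ)) ^ (-(1 : ℝ) / 22) := by
  have hVpos : 0 < (volume (ball (0 : EuclideanSpace ℝ (Fin 3)) 1)).toReal :=
    ENNReal.toReal_pos (measure_ball_pos _ _ one_pos).ne' measure_ball_lt_top.ne
  set V := (volume (ball (0 : EuclideanSpace ℝ (Fin 3)) 1)).toReal with hV
  refine ⟨M * (100 : ℝ) ^ (67 / 22 : ℝ) * (67 * V) * 3 ^ ((1 : ℝ) / 22), by positivity, ?_⟩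
  intro h hh0 hh1 d ℓ f hd hℓ hf
  haveI : Nonempty (Fin M) := ⟨⟨0, hM⟩⟩
  set r := h ^ (3 / 2 : ℝ) with hrdef
  have hr0 : 0 < r := Real.rpow_pos_of_pos hh0 _
  have hr1 : r < 1 := Real.rpow_lt_one hh0.le hh1 (by norm_num)
  set s := r / 3 with hsdef
  have hs0 : 0 < s := by positivity
  have hs1 : s ≤ 1 := by rw [hsdef]; linarith
  -- basic facts
  have hd0 : ∀ u, 0 ≤ d u := fun u => by
    rw [hd u]; exact le_ciInf fun k => dist_nonneg
  have hdattain : ∀ u, ∃ k, d u = dist u (rk k) := fun u => by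
    obtain ⟨k₀, hk₀⟩ := Finite.exists_min (fun k => dist u (rk k))
    exact ⟨k₀, (hd u) ▸ le_antisymm
      (ciInf_le (Set.Finite.bddBelow (Set.finite_range _)) k₀) (le_ciInf hk₀)⟩
  have hℓpos : ∀ u, 0 < ℓ u := fun u => by
    have h1 : 0 < Real.sqrt (r ^ 2 + d u ^ 2) :=
      Real.sqrt_pos.mpr (by nlinarith [sq_nonneg (d u)])
    rw [hℓ u]; linarith
  have hℓd : ∀ u, d u / 100 ≤ ℓ u := fun u => by
    have h1 : d u ≤ Real.sqrt (r ^ 2 + d u ^ 2) := by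
      rw [show d u = Real.sqrt (d u ^ 2) from (Real.sqrt_sq (hd0 u)).symm]
      exact Real.sqrt_le_sqrt (by nlinarith [Real.sq_sqrt (sq_nonneg (d u))])
    rw [hℓ u]; linarith
  set g : EuclideanSpace ℝ (Fin 3) → ℝ := fun x => max ‖x‖ s ^ (-(67 / 22) : ℝ) with hg
  have hg0 : ∀ x, 0 ≤ g x := fun x => Real.rpow_nonneg (le_max_of_le_right hs0.le) _
  set S := {u : EuclideanSpace ℝ (Fin 3) | ‖u‖ ≤ 2 * h⁻¹ ∧ s ≤ d u} with hS
  set F : EuclideanSpace ℝ (Fin 3) → ℝ :=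
    fun u => ℓ u ^ (-3 : ℝ) * (ℓ u ^ (2 - 1 / 11 : ℝ) * f u ^ (4 - 1 / 11 : ℝ)) with hFdef
  have hdmeas : Measurable d := by
    have hfun : d = fun u => ⨅ k, dist u (rk k) := funext hd
    rw [hfun]
    exact Measurable.iInf fun k => (Continuous.dist continuous_id continuous_const).measurable
  have hSmeas : MeasurableSet S :=
    (measurableSet_le measurable_norm measurable_const).inter
      (measurableSet_le measurable_const hdmeas)
  have hf0 : ∀ u, 0 ≤ f u := fun u => by
    rw [hf u]
    exact le_min (Real.rpow_nonneg (hℓpos u).le _) (Real.rpow_nonneg (hℓpos u).le _)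
  have hF0 : ∀ u, 0 ≤ F u := fun u =>
    mul_nonneg (Real.rpow_nonneg (hℓpos u).le _)
      (mul_nonneg (Real.rpow_nonneg (hℓpos u).le _) (Real.rpow_nonneg (hf0 u) _))
  have hgint : Integrable g := aux_integrable hs0 hs1
  have hgint' : ∀ k : Fin M,
      Integrable (fun u : EuclideanSpace ℝ (Fin 3) => (100 : ℝ) ^ (67 / 22 : ℝ) * g (u - rk k)) :=
    fun k => (hgint.comp_sub_right (rk k)).const_mul _
  have key : ∀ u ∈ S, F u ≤ ∑ k, (100 : ℝ) ^ (67 / 22 : ℝ) * g (u - rk k) := by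
    intro u hu
    have hu2 : s ≤ d u := hu.2
    obtain ⟨k₀, hk₀⟩ := hdattain u
    have hℓu := hℓpos u
    have hfle : f u ^ (4 - 1 / 11 : ℝ) ≤ ℓ u ^ ((-(1 : ℝ) / 2) * (4 - 1 / 11 : ℝ)) := by
      calc f u ^ (4 - 1 / 11 : ℝ) ≤ (ℓ u ^ (-(1 : ℝ) / 2)) ^ (4 - 1 / 11 : ℝ) :=
            Real.rpow_le_rpow (hf0 u) (by rw [hf u]; exact min_le_left _ _) (by norm_num)
        _ = ℓ u ^ ((-(1 : ℝ) / 2) * (4 - 1 / 11 : ℝ)) := (Real.rpow_mul hℓu.le _ _).symm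
    have step1 : F u ≤ ℓ u ^ (-(67 / 22) : ℝ) := by
      have h1 : F u ≤ ℓ u ^ (-3 : ℝ) *
          (ℓ u ^ (2 - 1 / 11 : ℝ) * ℓ u ^ ((-(1 : ℝ) / 2) * (4 - 1 / 11 : ℝ))) :=
        mul_le_mul_of_nonneg_left
          (mul_le_mul_of_nonneg_left hfle (Real.rpow_nonneg hℓu.le _))
          (Real.rpow_nonneg hℓu.le _)
      refine h1.trans (le_of_eq ?_)
      rw [← Real.rpow_add hℓu, ← Real.rpow_add hℓu]
      norm_num
    have hmax : max ‖u - rk k₀‖ s = d u := by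
      rw [← dist_eq_norm, ← hk₀, max_eq_left hu2]
    have step2 : ℓ u ^ (-(67 / 22) : ℝ) ≤ (100 : ℝ) ^ (67 / 22 : ℝ) * g (u - rk k₀) := by
      have hdu0 : 0 < d u := hs0.trans_le hu2
      have h2 : ℓ u ^ (-(67 / 22) : ℝ) ≤ (d u / 100) ^ (-(67 / 22) : ℝ) :=
        Real.rpow_le_rpow_of_nonpos (by positivity) (hℓd u) (by norm_num)
      have heq : (d u / 100) ^ (-(67 / 22) : ℝ)
          = (100 : ℝ) ^ (67 / 22 : ℝ) * d u ^ (-(67 / 22) : ℝ) := by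
        rw [Real.div_rpow (hd0 u) (by norm_num : (0:ℝ) ≤ 100),
          Real.rpow_neg (by norm_num : (0:ℝ) ≤ 100), div_eq_mul_inv, inv_inv]
        ring
      rw [hg]
      simp only []
      rw [hmax]
      exact h2.trans (le_of_eq heq)
    have step3 : (100 : ℝ) ^ (67 / 22 : ℝ) * g (u - rk k₀)
        ≤ ∑ k, (100 : ℝ) ^ (67 / 22 : ℝ) * g (u - rk k) :=
      Finset.single_le_sum (f := fun k => (100 : ℝ) ^ (67 / 22 : ℝ) * g (u - rk k))
        (fun k _ => mul_nonneg (by positivity) (hg0 _)) (Finset.mem_univ k₀)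
    exact step1.trans (step2.trans step3)
  have hs_exp : s ^ (-(1 : ℝ) / 22) = r ^ (-(1 : ℝ) / 22) * 3 ^ ((1 : ℝ) / 22) := by
    rw [hsdef, show (-(1:ℝ)/22) = -((1:ℝ)/22) by ring,
      Real.div_rpow hr0.le (by norm_num : (0:ℝ) ≤ 3),
      Real.rpow_neg (by norm_num : (0:ℝ) ≤ 3), div_eq_mul_inv, inv_inv]
  calc ∫ u in S, F u = ∫ u, S.indicator F u := (integral_indicator hSmeas).symm
    _ ≤ ∫ u, ∑ k, (100 : ℝ) ^ (67 / 22 : ℝ) * g (u - rk k) := by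
        refine integral_mono_of_nonneg
          (Filter.Eventually.of_forall fun u => Set.indicator_nonneg (fun v _ => hF0 v) u)
          (integrable_finset_sum _ fun k _ => hgint' k)
          (Filter.Eventually.of_forall fun u => ?_)
        by_cases hu : u ∈ S
        · rw [Set.indicator_of_mem hu]; exact key u hu
        · rw [Set.indicator_of_notMem hu]
          exact Finset.sum_nonneg fun k _ => mul_nonneg (by positivity) (hg0 _)
    _ = ∑ k : Fin M, ∫ u, (100 : ℝ) ^ (67 / 22 : ℝ) * g (u - rk k) :=
        integral_finset_sum _ fun k _ => hgint' k
    _ = ∑ _k : Fin M, (100 : ℝ) ^ (67 / 22 : ℝ) * ∫ x, g x := by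
        refine Finset.sum_congr rfl fun k _ => ?_
        rw [integral_const_mul, integral_sub_right_eq_self g (rk k)]
    _ = M * (100 : ℝ) ^ (67 / 22 : ℝ) * (67 * V) * 3 ^ ((1 : ℝ) / 22) * r ^ (-(1 : ℝ) / 22) := by
        rw [hg]
        rw [aux_value hs0, ← hV, Finset.sum_const, Finset.card_univ, Fintype.card_fin,
          hs_exp]
        ring
end
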